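/- Let Γ be a set and E = ℓ¹(Γ). Then every weakly compact subset K of E contains only finitely many of the standard unit vectors: the set {γ ∈ Γ : e_γ ∈ K} is finite, where e_γ denotes the family equal to 1 at γ and 0 elsewhere. -/

import Mathlib

open Filter ENNReal Topology

section aux

variable (Γ : Type*)

private noncomputable def coordFn (γ0 : Γ) : lp (fun _ : Γ => ℝ) 1 →L[ℝ] ℝ :=
  LinearMap.mkContinuous
    { toFun := fun y => y γ0
      map_add' := fun y z => by simp [lp.coeFn_add]
      map_smul' := fun c y => by simp [lp.coeFn_smul] }
    1 (fun y => by
      show ‖y γ0‖ ≤ 1 * ‖y‖; simpa using lp.norm_apply_le_norm one_ne_zero y γ0)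

private lemma summable_coe (y : lp (fun _ : Γ => ℝ) 1) : Summable fun γ => y γ := by
  have h := (lp.memℓp y).summable (p := 1) (by norm_num)
  simp only [ENNReal.toReal_one, Real.rpow_one] at h
  exact h.of_norm

private noncomputable def sumFn : lp (fun _ : Γ => ℝ) 1 →L[ℝ] ℝ :=
  LinearMap.mkContinuous
    { toFun := fun y => ∑' γ, y γ
      map_add' := fun y z => by
        simp only [lp.coeFn_add, Pi.add_apply]
        exact Summable.tsum_add (summable_coe Γ y) (summable_coe Γ z)
      map_smul' := fun c y => by
        simp only [lp.coeFn_smul, Pi.smul_apply, RingHom.id_apply, smul_eq_mul]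
        exact tsum_mul_left }
    1 (fun y => by
      simp only [LinearMap.coe_mk, AddHom.coe_mk, one_mul]
      calc ‖∑' γ, y γ‖ ≤ ∑' γ, ‖y γ‖ := norm_tsum_le_tsum_norm (by
              simpa [Real.norm_eq_abs] using (summable_coe Γ y).abs)
        _ ≤ ‖y‖ := by
            have h := lp.norm_rpow_eq_tsum (p := 1) (by norm_num) y
            simp only [ENNReal.toReal_one, Real.rpow_one] at h
            exact le_of_eq h.symm)

end aux

/-- Every weakly compact subset of `ℓ¹(Γ)` contains only finitely many of the standard
unit vectors. -/
theorem finite_unitVectors_mem_weaklyCompact (Γ : Type*) [DecidableEq Γ]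
    (K : Set (lp (fun _ : Γ => ℝ) 1))
    (hK : IsCompact (toWeakSpace ℝ (lp (fun _ : Γ => ℝ) 1) '' K)) :
    {γ : Γ | lp.single 1 γ (1 : ℝ) ∈ K}.Finite := by
  by_contra hfin
  have hS : Set.Infinite {γ : Γ | lp.single 1 γ (1 : ℝ) ∈ K} := hfin
  set S := {γ : Γ | lp.single 1 γ (1 : ℝ) ∈ K} with hSdef
  haveI : (cofinite ⊓ 𝓟 S).NeBot := hS.cofinite_inf_principal_neBot
  set U : Ultrafilter Γ := Ultrafilter.of (cofinite ⊓ 𝓟 S) with hU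
  have hUle : (U : Filter Γ) ≤ cofinite ⊓ 𝓟 S := Ultrafilter.of_le _
  have hScof : S ∈ U := hUle (mem_inf_of_right (mem_principal_self S))
  have hcof : (U : Filter Γ) ≤ cofinite := hUle.trans inf_le_left
  set f : Γ → WeakSpace ℝ (lp (fun _ : Γ => ℝ) 1) :=
    fun γ => toWeakSpace ℝ (lp (fun _ : Γ => ℝ) 1) (lp.single 1 γ 1) with hf
  have hmem : ∀ γ ∈ S, f γ ∈ toWeakSpace ℝ (lp (fun _ : Γ => ℝ) 1) '' K :=
    fun γ hγ => ⟨_, hγ, rfl⟩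
  have hle : (U.map f : Filter (WeakSpace ℝ (lp (fun _ : Γ => ℝ) 1))) ≤
      𝓟 (toWeakSpace ℝ (lp (fun _ : Γ => ℝ) 1) '' K) := by
    rw [le_principal_iff, Ultrafilter.mem_coe, Ultrafilter.mem_map]
    exact mem_of_superset hScof (fun γ hγ => hmem γ hγ)
  obtain ⟨x, hxmem, hxle⟩ := hK.ultrafilter_le_nhds (U.map f) hle
  obtain ⟨y, -, rfl⟩ := hxmem
  -- continuous linear functionals are weakly continuous
  have key : ∀ φ : lp (fun _ : Γ => ℝ) 1 →L[ℝ] ℝ,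
      Tendsto (fun γ => φ (lp.single 1 γ 1)) U (𝓝 (φ y)) := by
    intro φ
    have hcont : Continuous fun z : WeakSpace ℝ (lp (fun _ : Γ => ℝ) 1) =>
        (topDualPairing ℝ (lp (fun _ : Γ => ℝ) 1)).flip z φ := WeakBilin.eval_continuous _ _
    exact (hcont.tendsto _).comp hxle
  -- each coordinate of y is 0
  have hy0 : ∀ γ0 : Γ, (y : ∀ _ : Γ, ℝ) γ0 = 0 := by
    intro γ0
    have h1 := key (coordFn Γ γ0)
    have hev : ∀ᶠ γ in (U : Filter Γ), (fun γ => coordFn Γ γ0 (lp.single 1 γ 1)) γ = 0 := by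
      have : {γ0}ᶜ ∈ (U : Filter Γ) := hcof (by simp)
      filter_upwards [this] with γ hγ
      simp only [Set.mem_compl_iff, Set.mem_singleton_iff] at hγ
      show (lp.single 1 γ (1:ℝ) : ∀ _ : Γ, ℝ) γ0 = 0
      simp [lp.single_apply, Ne.symm hγ]
    have h3 : Tendsto (fun γ => coordFn Γ γ0 (lp.single 1 γ 1)) U (𝓝 0) :=
      Tendsto.congr' (hev.mono fun γ h => h.symm) tendsto_const_nhds
    exact (tendsto_nhds_unique h1 h3 : coordFn Γ γ0 y = 0)
  have hyzero : y = 0 := by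
    ext γ
    simpa using hy0 γ
  -- but the sum functional gives 1 = 0
  have h1 := key (sumFn Γ)
  have hval : ∀ γ : Γ, sumFn Γ (lp.single 1 γ 1) = 1 := by
    intro γ
    show (∑' γ', (lp.single 1 γ (1:ℝ) : ∀ _ : Γ, ℝ) γ') = 1
    have : (fun γ' => (lp.single 1 γ (1:ℝ) : ∀ _ : Γ, ℝ) γ')
        = fun γ' => if γ' = γ then (1:ℝ) else 0 := by
      funext γ'
      by_cases h : γ' = γ
      · subst h; simp [lp.single_apply]
      · simp [lp.single_apply, h]
    rw [this]
    exact tsum_ite_eq γ (fun _ => (1:ℝ))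
  have h1' : Tendsto (fun _ : Γ => (1:ℝ)) U (𝓝 (sumFn Γ y)) :=
    h1.congr fun γ => (hval γ)
  have h2 : Tendsto (fun _ : Γ => (1:ℝ)) U (𝓝 1) := tendsto_const_nhds
  have : sumFn Γ y = 1 := tendsto_nhds_unique h1' h2
  rw [hyzero] at this
  simp at this
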